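/- If the operator I - S_{N-1} has kernel of dimension ≥ 2 (equivalently I - S_{N-1}* has kernel of dimension ≥ 2), then there exists a nonzero x orthogonal to g_0 and to all g_n for n ≥ N; hence if {g_0} ∪ {g_n : n ≥ N} is linearly dense for all N (stability), then ker(I - S_{N-1}) is one-dimensional for every N ≥ 1. -/

import Mathlib

open scoped ComplexInnerProductSpace
set_option linter.unusedSectionVars false

section KZ
variable {H : Type*} [NormedAddCommGroup H] [InnerProductSpace ℂ H] [CompleteSpace H]
  (e g : ℕ → H)
  (hg0 : g 0 = e 0)
  (hg : ∀ n, 0 < n → g n = e n - ∑ i ∈ Finset.range n, ⟪e i, e n⟫ • g i)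
  (S : ℕ → H →L[ℂ] H)
  (hS : ∀ (n : ℕ) (y : H), S n y = ∑ j ∈ Finset.range (n + 1), ⟪e j, y⟫ • g j)

include hg hS in
theorem kz_g_succ (n : ℕ) : g (n + 1) = e (n + 1) - S n (e (n + 1)) := by
  rw [hS, hg (n + 1) (Nat.succ_pos n)]

include hg hS in
theorem kz_step (m : ℕ) :
    (1 - S (m + 1) : H →L[ℂ] H)
      = (1 - S m : H →L[ℂ] H) ∘L (1 - (innerSL ℂ (e (m+1))).smulRight (e (m+1))) := by
  ext y
  have hsplit : S (m + 1) y = S m y + ⟪e (m+1), y⟫ • g (m+1) := by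
    rw [hS, hS, Finset.sum_range_succ]
  have hgs := kz_g_succ e g hg S hS m
  simp only [ContinuousLinearMap.coe_comp', Function.comp_apply,
    ContinuousLinearMap.sub_apply, ContinuousLinearMap.one_apply, hsplit,
    ContinuousLinearMap.smulRight_apply, innerSL_apply_apply, map_sub, map_smul, hgs]
  rw [smul_sub]
  abel

include hg0 hg hS in
theorem kz_fixed (he : ∀ n, ‖e n‖ = 1) (m : ℕ) : S m (e m) = e m := by
  have h1 : ⟪e m, e m⟫ = 1 := by
    rw [inner_self_eq_norm_sq_to_K, he m]; norm_num
  rw [hS, Finset.sum_range_succ, h1, one_smul]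
  rcases Nat.eq_zero_or_pos m with h | h
  · subst h; simp [hg0]
  · rw [hg m h]; abel

include hg hS in
theorem kz_adj_zero (x : H) (k : ℕ)
    (hx : ContinuousLinearMap.adjoint (1 - S k : H →L[ℂ] H) x = 0) :
    ∀ m, k ≤ m → ContinuousLinearMap.adjoint (1 - S m : H →L[ℂ] H) x = 0 := by
  intro m hm
  induction m, hm using Nat.le_induction with
  | base => exact hx
  | succ m hm ih =>
    rw [kz_step e g hg S hS m, ContinuousLinearMap.adjoint_comp,
      ContinuousLinearMap.comp_apply, ih, map_zero]

include hg hS in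
theorem kz_orth (N : ℕ) (hN : 1 ≤ N) (x : H)
    (hx : ContinuousLinearMap.adjoint (1 - S (N - 1) : H →L[ℂ] H) x = 0) :
    ∀ n, N ≤ n → ⟪g n, x⟫ = 0 := by
  intro n hn
  obtain ⟨m, rfl⟩ : ∃ m, n = m + 1 := ⟨n - 1, by omega⟩
  have hadj := kz_adj_zero e g hg S hS x (N - 1) hx m (by omega)
  have hgm : g (m + 1) = (1 - S m : H →L[ℂ] H) (e (m + 1)) := by
    rw [kz_g_succ e g hg S hS m]; simp
  rw [hgm, ← ContinuousLinearMap.adjoint_inner_right, hadj, inner_zero_right]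

include hg0 hg hS in
theorem kz_exists_adj (N : ℕ) (hN : 1 ≤ N)
    (hrank : 2 ≤ Module.rank ℂ (LinearMap.ker (((1 - S (N - 1)) : H →L[ℂ] H) : H →ₗ[ℂ] H))) :
    ∃ x : H, x ≠ 0 ∧ ⟪g 0, x⟫ = 0 ∧
      ContinuousLinearMap.adjoint (1 - S (N - 1) : H →L[ℂ] H) x = 0 := by
  classical
  set T : H →L[ℂ] H := (1 - S (N - 1)) with hT
  set T' : H →L[ℂ] H := ContinuousLinearMap.adjoint T with hT'
  set V : Submodule ℂ H := Submodule.span ℂ (e '' ↑(Finset.range N)) with hV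
  haveI : FiniteDimensional ℂ V :=
    FiniteDimensional.span_of_finite ℂ ((Finset.range N).finite_toSet.image e)
  have heV : ∀ j < N, e j ∈ V := fun j hj =>
    Submodule.subset_span ⟨j, by simpa using hj, rfl⟩
  have hgV : ∀ j, j < N → g j ∈ V := by
    intro j
    induction j using Nat.strong_induction_on with
    | _ j ih =>
      intro hj
      rcases Nat.eq_zero_or_pos j with h | h
      · subst h; rw [hg0]; exact heV 0 hj
      · rw [hg j h]
        refine sub_mem (heV j hj) (Submodule.sum_mem _ fun i hi => ?_)
        exact Submodule.smul_mem _ _ (ih i (Finset.mem_range.mp hi) (by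
          exact lt_trans (Finset.mem_range.mp hi) hj))
  have hNsucc : N - 1 + 1 = N := by omega
  have hSV : ∀ y : H, S (N - 1) y ∈ V := by
    intro y
    rw [hS, hNsucc]
    exact Submodule.sum_mem _ fun j hj =>
      Submodule.smul_mem _ _ (hgV j (Finset.mem_range.mp hj))
  have hadjS : ∀ x : H, ContinuousLinearMap.adjoint (S (N - 1)) x
      = ∑ j ∈ Finset.range N, ⟪g j, x⟫ • e j := by
    intro x
    refine ext_inner_right ℂ fun v => ?_
    rw [ContinuousLinearMap.adjoint_inner_left, hS, hNsucc]
    rw [inner_sum, sum_inner]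
    refine Finset.sum_congr rfl fun j _ => ?_
    simp only [inner_smul_left, inner_smul_right, inner_conj_symm]
    ring
  have hT'eq : ∀ x : H, T' x = x - ContinuousLinearMap.adjoint (S (N - 1)) x := by
    intro x
    rw [hT', hT, map_sub, ContinuousLinearMap.one_def, ContinuousLinearMap.adjoint_id]
    rfl
  have hS'V : ∀ x : H, ContinuousLinearMap.adjoint (S (N - 1)) x ∈ V := by
    intro x
    rw [hadjS]
    exact Submodule.sum_mem _ fun j hj =>
      Submodule.smul_mem _ _ (heV j (Finset.mem_range.mp hj))
  have hTV : ∀ v ∈ V, (T : H →ₗ[ℂ] H) v ∈ V := by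
    intro v hv
    have : T v = v - S (N - 1) v := rfl
    simpa [this] using sub_mem hv (hSV v)
  have hT'V : ∀ v ∈ V, (T' : H →ₗ[ℂ] H) v ∈ V := by
    intro v hv
    simpa [hT'eq v] using sub_mem hv (hS'V v)
  set A : V →ₗ[ℂ] V := LinearMap.restrict (T : H →ₗ[ℂ] H) hTV with hA
  set B : V →ₗ[ℂ] V := LinearMap.restrict (T' : H →ₗ[ℂ] H) hT'V with hB
  -- kernels as mapped submodules
  have hkerT : LinearMap.ker (T : H →ₗ[ℂ] H) = (LinearMap.ker A).map V.subtype := by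
    ext x
    constructor
    · intro hx
      have hx0 : T x = 0 := hx
      have hxV : x ∈ V := by
        have : x = S (N - 1) x := by
          have := hx0
          rw [hT] at this
          simp only [ContinuousLinearMap.sub_apply, ContinuousLinearMap.one_apply,
            sub_eq_zero] at this
          exact this
        rw [this]; exact hSV x
      refine ⟨⟨x, hxV⟩, ?_, rfl⟩
      have : A ⟨x, hxV⟩ = ⟨T x, hTV x hxV⟩ := rfl
      simp [LinearMap.mem_ker, this, Subtype.ext_iff, hx0]
    · rintro ⟨⟨x, hxV⟩, hker, rfl⟩
      have h0 : A ⟨x, hxV⟩ = 0 := hker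
      have h1 : T x = 0 := congrArg Subtype.val h0
      exact h1
  have hkerT' : LinearMap.ker (T' : H →ₗ[ℂ] H) = (LinearMap.ker B).map V.subtype := by
    ext x
    constructor
    · intro hx
      have hx0 : T' x = 0 := hx
      have hxV : x ∈ V := by
        have h2 : x = ContinuousLinearMap.adjoint (S (N - 1)) x := by
          have h3 := hT'eq x
          rw [hx0] at h3
          exact (sub_eq_zero.mp h3.symm)
        rw [h2]; exact hS'V x
      refine ⟨⟨x, hxV⟩, ?_, rfl⟩
      have h4 : B ⟨x, hxV⟩ = ⟨T' x, hT'V x hxV⟩ := rfl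
      simp [LinearMap.mem_ker, h4, Subtype.ext_iff, hx0]
    · rintro ⟨⟨x, hxV⟩, hker, rfl⟩
      have h0 : B ⟨x, hxV⟩ = 0 := hker
      have h1 : T' x = 0 := congrArg Subtype.val h0
      exact h1
  -- adjoint relation on V : ker B = (range A)ᗮ
  have hAB : ∀ (v w : V), ⟪(A v : H), (w : H)⟫ = ⟪(v : H), (B w : H)⟫ := by
    intro v w
    have h1 : (A v : H) = T (v : H) := rfl
    have h2 : (B w : H) = T' (w : H) := rfl
    rw [h1, h2, hT', ContinuousLinearMap.adjoint_inner_right]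
  have hkerB : LinearMap.ker B = (LinearMap.range A)ᗮ := by
    ext w
    simp only [LinearMap.mem_ker, Submodule.mem_orthogonal]
    constructor
    · intro hw u hu
      obtain ⟨v, rfl⟩ := hu
      have := hAB v w
      rw [hw] at this
      calc ⟪A v, w⟫ = ⟪(A v : H), (w : H)⟫ := rfl
        _ = 0 := by rw [this]; simp
    · intro hw
      have h5 : ⟪B w, B w⟫ = 0 := by
        have h6 := hAB (B w) w
        have h7 := hw (A (B w)) ⟨B w, rfl⟩
        calc ⟪B w, B w⟫ = ⟪((B w : V) : H), (B w : H)⟫ := rfl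
          _ = ⟪(A (B w) : H), (w : H)⟫ := h6.symm
          _ = ⟪A (B w), w⟫ := rfl
          _ = 0 := h7
      exact inner_self_eq_zero.mp h5
  -- finrank computations
  have hfk1 : Module.finrank ℂ (LinearMap.ker (T : H →ₗ[ℂ] H)) = Module.finrank ℂ (LinearMap.ker A) := by
    rw [hkerT, Submodule.finrank_map_subtype_eq]
  have hfk2 : Module.finrank ℂ (LinearMap.ker (T' : H →ₗ[ℂ] H)) = Module.finrank ℂ (LinearMap.ker B) := by
    rw [hkerT', Submodule.finrank_map_subtype_eq]
  have hfk3 : Module.finrank ℂ (LinearMap.ker B) = Module.finrank ℂ (LinearMap.ker A) := by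
    have h8 := Submodule.finrank_add_finrank_orthogonal (K := LinearMap.range A)
    have h9 := LinearMap.finrank_range_add_finrank_ker A
    rw [hkerB]
    omega
  haveI : FiniteDimensional ℂ (LinearMap.ker (T : H →ₗ[ℂ] H)) := by
    rw [hkerT]
    infer_instance
  have hfin2 : 2 ≤ Module.finrank ℂ (LinearMap.ker (T : H →ₗ[ℂ] H)) := by
    rw [← Module.finrank_eq_rank ℂ] at hrank
    exact_mod_cast hrank
  have hfinT' : 2 ≤ Module.finrank ℂ (LinearMap.ker (T' : H →ₗ[ℂ] H)) := by
    rw [hfk2, hfk3, ← hfk1]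
    exact hfin2
  haveI : FiniteDimensional ℂ (LinearMap.ker (T' : H →ₗ[ℂ] H)) := by
    rw [hkerT']
    infer_instance
  -- find x in ker T' orthogonal to g 0
  set φ : (LinearMap.ker (T' : H →ₗ[ℂ] H)) →ₗ[ℂ] ℂ :=
    (innerSL ℂ (g 0) : H →L[ℂ] ℂ).toLinearMap.comp (LinearMap.ker (T' : H →ₗ[ℂ] H)).subtype with hφ
  have h10 := LinearMap.finrank_range_add_finrank_ker φ
  have h11 : Module.finrank ℂ (LinearMap.range φ) ≤ 1 := by
    have := Submodule.finrank_le (LinearMap.range φ)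
    simpa [Module.finrank_self] using this
  have h12 : 0 < Module.finrank ℂ (LinearMap.ker φ) := by omega
  obtain ⟨w, hw0⟩ := Module.finrank_pos_iff_exists_ne_zero.mp h12
  refine ⟨((w : LinearMap.ker (T' : H →ₗ[ℂ] H)) : H), ?_, ?_, ?_⟩
  · intro hcon
    apply hw0
    have : ((w : LinearMap.ker (T' : H →ₗ[ℂ] H)) : H) = 0 := hcon
    ext
    exact this
  · exact w.2
  · exact (w : LinearMap.ker (T' : H →ₗ[ℂ] H)).2

end KZ

section Main
variable {H : Type*} [NormedAddCommGroup H] [InnerProductSpace ℂ H] [CompleteSpace H]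

theorem kz_ker_fd (g : ℕ → H) (S : ℕ → H →L[ℂ] H) (e : ℕ → H)
    (hS : ∀ (n : ℕ) (y : H), S n y = ∑ j ∈ Finset.range (n + 1), ⟪e j, y⟫ • g j)
    (n : ℕ) : FiniteDimensional ℂ (LinearMap.ker (((1 - S n) : H →L[ℂ] H) : H →ₗ[ℂ] H)) := by
  haveI : FiniteDimensional ℂ (Submodule.span ℂ (g '' ↑(Finset.range (n+1)))) :=
    FiniteDimensional.span_of_finite ℂ ((Finset.range (n+1)).finite_toSet.image g)
  refine Submodule.finiteDimensional_of_le (S₂ := Submodule.span ℂ (g '' ↑(Finset.range (n+1)))) ?_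
  intro x hx
  have hx0 : (1 - S n : H →L[ℂ] H) x = 0 := hx
  have hx1 : x = S n x := by
    simpa [sub_eq_zero] using hx0
  rw [hx1, hS]
  exact Submodule.sum_mem _ fun j hj =>
    Submodule.smul_mem _ _ (Submodule.subset_span ⟨j, by simpa using hj, rfl⟩)

theorem kaczmarz_kernel_dimension'
    (e g : ℕ → H) (he : ∀ n, ‖e n‖ = 1)
    (hg0 : g 0 = e 0)
    (hg : ∀ n, 0 < n → g n = e n - ∑ i ∈ Finset.range n, ⟪e i, e n⟫ • g i)
    (hbessel : ∀ x : H, ∀ s : Finset ℕ, ∑ n ∈ s, ‖⟪g n, x⟫‖ ^ 2 ≤ ‖x‖ ^ 2)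
    (S : ℕ → H →L[ℂ] H)
    (hS : ∀ (n : ℕ) (y : H), S n y = ∑ j ∈ Finset.range (n + 1), ⟪e j, y⟫ • g j) :
    (∀ N, 1 ≤ N →
      2 ≤ Module.rank ℂ (LinearMap.ker (((1 - S (N - 1)) : H →L[ℂ] H) : H →ₗ[ℂ] H)) →
      ∃ x : H, x ≠ 0 ∧ ⟪g 0, x⟫ = 0 ∧ ∀ n, N ≤ n → ⟪g n, x⟫ = 0) ∧
    ((∀ N : ℕ,
        (Submodule.span ℂ (insert (g 0) (g '' {n | N ≤ n}))).topologicalClosure = ⊤) →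
      ∀ N, 1 ≤ N →
        Module.rank ℂ (LinearMap.ker (((1 - S (N - 1)) : H →L[ℂ] H) : H →ₗ[ℂ] H)) = 1) := by
  have part1 : ∀ N, 1 ≤ N →
      2 ≤ Module.rank ℂ (LinearMap.ker (((1 - S (N - 1)) : H →L[ℂ] H) : H →ₗ[ℂ] H)) →
      ∃ x : H, x ≠ 0 ∧ ⟪g 0, x⟫ = 0 ∧ ∀ n, N ≤ n → ⟪g n, x⟫ = 0 := by
    intro N hN hrank
    obtain ⟨x, hx0, hxg0, hxadj⟩ := kz_exists_adj e g hg0 hg S hS N hN hrank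
    exact ⟨x, hx0, hxg0, kz_orth e g hg S hS N hN x hxadj⟩
  refine ⟨part1, ?_⟩
  intro hdense N hN
  haveI := kz_ker_fd g S e hS (N - 1)
  have hrk := Module.finrank_eq_rank ℂ (LinearMap.ker (((1 - S (N - 1)) : H →L[ℂ] H) : H →ₗ[ℂ] H))
  set k := Module.finrank ℂ (LinearMap.ker (((1 - S (N - 1)) : H →L[ℂ] H) : H →ₗ[ℂ] H)) with hk
  -- k ≥ 1
  have hmem : e (N - 1) ∈ LinearMap.ker (((1 - S (N - 1)) : H →L[ℂ] H) : H →ₗ[ℂ] H) := by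
    have := kz_fixed e g hg0 hg S hS he (N - 1)
    simp [LinearMap.mem_ker, sub_eq_zero, this]
  have hne : e (N - 1) ≠ 0 := fun h => by simpa [h] using he (N - 1)
  have h1 : 0 < k := by
    rw [hk, Module.finrank_pos_iff_exists_ne_zero]
    exact ⟨⟨e (N - 1), hmem⟩, fun h => hne (congrArg Subtype.val h)⟩
  -- k < 2
  have h2 : ¬ (2 ≤ k) := by
    intro h2k
    have hrank : 2 ≤ Module.rank ℂ (LinearMap.ker (((1 - S (N - 1)) : H →L[ℂ] H) : H →ₗ[ℂ] H)) := by
      rw [← hrk]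
      exact_mod_cast h2k
    obtain ⟨x, hx0, hxg0, hxorth⟩ := part1 N hN hrank
    apply hx0
    set W := Submodule.span ℂ (insert (g 0) (g '' {n | N ≤ n})) with hW
    have hle : W ≤ (ℂ ∙ x)ᗮ := by
      rw [hW, Submodule.span_le]
      rintro u (rfl | ⟨n, hn, rfl⟩)
      · exact Submodule.mem_orthogonal_singleton_iff_inner_left.mpr hxg0
      · exact Submodule.mem_orthogonal_singleton_iff_inner_left.mpr (hxorth n hn)
    have hcl : W.topologicalClosure ≤ (ℂ ∙ x)ᗮ :=
      Submodule.topologicalClosure_minimal _ hle (Submodule.isClosed_orthogonal _)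
    rw [hdense N] at hcl
    have hx : x ∈ (ℂ ∙ x)ᗮ := hcl Submodule.mem_top
    have := Submodule.mem_orthogonal_singleton_iff_inner_right.mp hx
    exact inner_self_eq_zero.mp this
  have hk1 : k = 1 := by omega
  rw [← hrk, hk1]
  norm_num

end Main

theorem kaczmarz_kernel_dimension
    {H : Type*} [NormedAddCommGroup H] [InnerProductSpace ℂ H] [CompleteSpace H]
    (e g : ℕ → H) (he : ∀ n, ‖e n‖ = 1)
    (hg0 : g 0 = e 0)
    (hg : ∀ n, 0 < n → g n = e n - ∑ i ∈ Finset.range n, ⟪e i, e n⟫ • g i)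
    (hbessel : ∀ x : H, ∀ s : Finset ℕ, ∑ n ∈ s, ‖⟪g n, x⟫‖ ^ 2 ≤ ‖x‖ ^ 2)
    (S : ℕ → H →L[ℂ] H)
    (hS : ∀ (n : ℕ) (y : H), S n y = ∑ j ∈ Finset.range (n + 1), ⟪e j, y⟫ • g j) :
    (∀ N, 1 ≤ N →
      2 ≤ Module.rank ℂ (LinearMap.ker (((1 - S (N - 1)) : H →L[ℂ] H) : H →ₗ[ℂ] H)) →
      ∃ x : H, x ≠ 0 ∧ ⟪g 0, x⟫ = 0 ∧ ∀ n, N ≤ n → ⟪g n, x⟫ = 0) ∧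
    ((∀ N : ℕ,
        (Submodule.span ℂ (insert (g 0) (g '' {n | N ≤ n}))).topologicalClosure = ⊤) →
      ∀ N, 1 ≤ N →
        Module.rank ℂ (LinearMap.ker (((1 - S (N - 1)) : H →L[ℂ] H) : H →ₗ[ℂ] H)) = 1) := by
  exact kaczmarz_kernel_dimension' e g he hg0 hg hbessel S hS
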